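/- For any n ∈ ℕ and p ∈ Δ(Ω), v_n(p) = v_∞(p) if and only if there exists a function g: Δ(Ω) → ℝ such that g ≥ v pointwise, g(σ(e)) ≥ Σ_{j∈[m]} λ_j g(p_j) for every experiment e = (λ_j, p_j)_{j∈[m]} ∈ F, and g(p) = v_n(p). -/

import Mathlib

open Filter Topology
open scoped Classical

noncomputable section

/-- Δ(Ω): beliefs, i.e. probability distributions on the finite state space Ω,
as a subspace of Ω → ℝ (its topology agrees with the total-variation one). -/
abbrev Belief (Ω : Type*) [Fintype Ω] :=
  {p : Ω → ℝ // (∀ ω, 0 ≤ p ω) ∧ ∑ ω, p ω = 1}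

variable {Ω : Type*} [Fintype Ω]

/-- An element of F₀: a finite-support experiment, i.e. a finitely supported probability
distribution over beliefs (keys are the distinct posteriors p_j, values the positive
weights λ_j). -/
structure SPExp (Ω : Type*) [Fintype Ω] where
  w : Belief Ω →₀ ℝ
  nonneg : ∀ p, 0 ≤ w p
  sum_one : ∑ p ∈ w.support, w p = 1

namespace SPExp

/-- τ(e): the support of an experiment. -/
def tau (e : SPExp Ω) : Finset (Belief Ω) := e.w.support

/-- Expectation of a real-valued function under an experiment. -/
def expect (e : SPExp Ω) (f : Belief Ω → ℝ) : ℝ := ∑ p ∈ e.w.support, e.w p * f p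

/-- σ(e): the barycenter (expectation) of an experiment. -/
def sigma (e : SPExp Ω) : Belief Ω :=
  ⟨fun ω => ∑ p ∈ e.w.support, e.w p * p.val ω,
   fun ω => Finset.sum_nonneg fun p _ => mul_nonneg (e.nonneg p) (p.2.1 ω),
   by
     calc ∑ ω, ∑ p ∈ e.w.support, e.w p * p.val ω
         = ∑ p ∈ e.w.support, ∑ ω, e.w p * p.val ω := Finset.sum_comm
       _ = ∑ p ∈ e.w.support, e.w p * ∑ ω, p.val ω := by
           refine Finset.sum_congr rfl fun p _ => ?_
           rw [Finset.mul_sum]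
       _ = ∑ p ∈ e.w.support, e.w p := by
           refine Finset.sum_congr rfl fun p _ => ?_
           rw [p.2.2, mul_one]
       _ = 1 := e.sum_one⟩

/-- The trivial experiment (1, p). -/
def triv (p : Belief Ω) : SPExp Ω where
  w := Finsupp.single p 1
  nonneg := fun q => by
    rw [Finsupp.single_apply]
    split <;> norm_num
  sum_one := by
    rw [Finsupp.support_single_ne_zero _ one_ne_zero]
    simp

end SPExp

/-- T: the set of trivial experiments. -/
def Trivials (Ω : Type*) [Fintype Ω] : Set (SPExp Ω) := Set.range SPExp.triv

/-- Weak convergence of experiments, viewed as Borel probability measures on Δ(Ω). -/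
def WeakTendsto (es : ℕ → SPExp Ω) (e : SPExp Ω) : Prop :=
  ∀ f : Belief Ω → ℝ, Continuous f →
    Tendsto (fun i => (es i).expect f) atTop (𝓝 (e.expect f))

/-- Convergence of beliefs in total variation. -/
def TVTendsto (ps : ℕ → Belief Ω) (p : Belief Ω) : Prop :=
  Tendsto (fun i => ∑ ω, |(ps i).val ω - p.val ω|) atTop (𝓝 0)

/-- Histories, most recent step first: entries are (experiment taken, realized posterior);
the starting belief is kept separately. -/
abbrev Hist (Ω : Type*) [Fintype Ω] := List (SPExp Ω × Belief Ω)

/-- last(ξ): the current belief after history ξ started at μ. -/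
def lastBelief (μ : Belief Ω) : Hist Ω → Belief Ω
  | [] => μ
  | (_, p) :: _ => p

/-- Pr[ξ]: the probability of a history. -/
def histProb : Hist Ω → ℝ
  | [] => 1
  | (e, p) :: ξ => e.w p * histProb ξ

/-- A sequential persuasion starting from μ with feasible experiments F, given by its
history-dependent choice of the next (feasible, Bayes-plausible) experiment.  An n-step
sequential persuasion is such a strategy used for n steps; an infinite sequential
persuasion is the strategy itself. -/
structure SeqP {Ω : Type*} [Fintype Ω] (F : Set (SPExp Ω)) (μ : Belief Ω) where
  next : Hist Ω → SPExp Ω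
  feasible : ∀ ξ, next ξ ∈ F
  bayes : ∀ ξ, (next ξ).sigma = lastBelief μ ξ

variable {F : Set (SPExp Ω)} {μ : Belief Ω}

/-- Expectation of g over the n-step histories of S extending ξ. -/
def histExp (S : SeqP F μ) (g : Hist Ω → ℝ) : ℕ → Hist Ω → ℝ
  | 0, ξ => g ξ
  | n + 1, ξ => (S.next ξ).expect fun p => histExp S g n ((S.next ξ, p) :: ξ)

/-- Ξ_n: the set of n-step histories of S. -/
def Hists (S : SeqP F μ) : ℕ → Set (Hist Ω)
  | 0 => {[]}
  | n + 1 => {ξ' | ∃ ξ ∈ Hists S n, ∃ p ∈ (S.next ξ).tau, ξ' = (S.next ξ, p) :: ξ}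

/-- ξ padded by l trivial steps. -/
def padHist (μ : Belief Ω) (ξ : Hist Ω) (l : ℕ) : Hist Ω :=
  List.replicate l (SPExp.triv (lastBelief μ ξ), lastBelief μ ξ) ++ ξ

/-- S terminates after ξ: all subsequent choices (along trivial continuations of ξ)
are the trivial experiment. -/
def TerminatesAfter (S : SeqP F μ) (ξ : Hist Ω) : Prop :=
  ∀ l : ℕ, S.next (padHist μ ξ l) = SPExp.triv (lastBelief μ ξ)

/-- 𝒱(S⁽ⁿ⁾) = E[v(b_n)], the expected utility of the n-step persuasion given by the
first n steps of S. -/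
def stepUtility (v : Belief Ω → ℝ) (S : SeqP F μ) (n : ℕ) : ℝ :=
  histExp S (fun ξ => v (lastBelief μ ξ)) n []

/-- Pr[S terminates after n steps]. -/
def termProb (S : SeqP F μ) (n : ℕ) : ℝ :=
  histExp S (fun ξ => if TerminatesAfter S ξ then 1 else 0) n []

/-- 𝒱(S) for an infinite sequential persuasion S. -/
def infUtility (v : Belief Ω → ℝ) (S : SeqP F μ) : ℝ :=
  ⨆ n : ℕ, histExp S (fun ξ => if TerminatesAfter S ξ then v (lastBelief μ ξ) else 0) n []

/-- Pr[b_n ∈ O] for the belief b_n induced by S after n steps. -/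
def massIn (S : SeqP F μ) (O : Set (Belief Ω)) (n : ℕ) : ℝ :=
  histExp S (fun ξ => if lastBelief μ ξ ∈ O then 1 else 0) n []

/-- v_n(p): the optimal value over n-step sequential persuasions starting from p. -/
def vN (F : Set (SPExp Ω)) (v : Belief Ω → ℝ) (n : ℕ) (p : Belief Ω) : ℝ :=
  ⨆ S : SeqP F p, stepUtility v S n

/-- v_∞(p): the optimal value over infinite sequential persuasions starting from p. -/
def vInf (F : Set (SPExp Ω)) (v : Belief Ω → ℝ) (p : Belief Ω) : ℝ :=
  ⨆ S : SeqP F p, infUtility v S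

/-- Assumption 1: a uniform support bound h, and weak closedness of F. -/
def Assumption1 (F : Set (SPExp Ω)) (h : ℕ) : Prop :=
  (∀ e ∈ F, e.tau.card ≤ h) ∧
  ∀ es : ℕ → SPExp Ω, (∀ i, es i ∈ F) → ∀ e : SPExp Ω, WeakTendsto es e → e ∈ F

/-- Shannon entropy of a belief. -/
def entropy (p : Belief Ω) : ℝ := -∑ ω, p.val ω * Real.log (p.val ω)

/-- Assumption 2: every nontrivial feasible experiment lowers expected entropy by δ. -/
def Assumption2 (F : Set (SPExp Ω)) (δ : ℝ) : Prop :=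
  ∀ e ∈ F \ Trivials Ω, e.expect entropy ≤ entropy e.sigma - δ

/-- S is (effectively) an n-step sequential persuasion: after n steps it only takes
trivial experiments. -/
def IsNStep (S : SeqP F μ) (n : ℕ) : Prop :=
  ∀ ξ : Hist Ω, n ≤ ξ.length → S.next ξ = SPExp.triv (lastBelief μ ξ)

/-- Assumption 3 at prior μ: a sequence of finite-step sequential persuasions whose
values tend to v_∞(μ) and which terminate at a uniform rate. -/
def Assumption3 (F : Set (SPExp Ω)) (v : Belief Ω → ℝ) (μ : Belief Ω) : Prop :=
  ∃ (nk : ℕ → ℕ) (Sk : ℕ → SeqP F μ),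
    (∀ k, IsNStep (Sk k) (nk k)) ∧
    Tendsto (fun k => stepUtility v (Sk k) (nk k)) atTop (𝓝 (vInf F v μ)) ∧
    ∀ ε : ℝ, 0 < ε → ∃ N : ℕ, ∀ k, N ≤ nk k → 1 - ε ≤ termProb (Sk k) N

/-- v̂: the concave closure of v (the value of unconstrained Bayesian persuasion). -/
def concaveClosure (v : Belief Ω → ℝ) (p : Belief Ω) : ℝ :=
  sSup {x : ℝ | ∃ e : SPExp Ω, e.sigma = p ∧ x = e.expect v}

/-- O is implementable for (μ, F). -/
def Implementable (F : Set (SPExp Ω)) (μ : Belief Ω) (O : Set (Belief Ω)) : Prop :=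
  ∀ ε : ℝ, 0 < ε → ∃ (n : ℕ) (S : SeqP F μ), 1 - ε < massIn S O n

/-- S is a Markov sequential persuasion compatible with (μ, D, Z, ρ). -/
def MarkovCompatible (S : SeqP F μ) (D Z : Set (Belief Ω)) (ρ : Belief Ω → SPExp Ω) : Prop :=
  ∀ ξ : Hist Ω,
    (lastBelief μ ξ ∈ D → S.next ξ = ρ (lastBelief μ ξ)) ∧
    (lastBelief μ ξ ∈ Z → S.next ξ = SPExp.triv (lastBelief μ ξ))

/-- The j-th child of vertex m at depth n of the infinite h-ary tree. -/
def treeChild {h n : ℕ} (m : Fin (h ^ n)) (j : Fin h) : Fin (h ^ (n + 1)) :=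
  ⟨m.val * h + j.val, by
    have h1 : m.val + 1 ≤ h ^ n := m.isLt
    have h2 : j.val < h := j.isLt
    calc m.val * h + j.val < m.val * h + h := by omega
      _ = (m.val + 1) * h := by ring
      _ ≤ h ^ n * h := Nat.mul_le_mul h1 le_rfl
      _ = h ^ (n + 1) := (pow_succ h n).symm⟩

/-- An h-branching sequential persuasion starting from μ. -/
structure HBranch (Ω : Type*) [Fintype Ω] (F : Set (SPExp Ω)) (h : ℕ) (μ : Belief Ω) where
  π : ∀ n : ℕ, Fin (h ^ n) → ℝ
  β : ∀ n : ℕ, Fin (h ^ n) → Belief Ω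
  η : ∀ n : ℕ, Fin (h ^ n) → SPExp Ω
  π_nonneg : ∀ n m, 0 ≤ π n m
  π_sum : ∀ n : ℕ, ∑ m, π n m = 1
  η_mem : ∀ n m, η n m ∈ F
  β_root : ∀ m, β 0 m = μ
  compat_sigma : ∀ n m, (η n m).sigma = β n m
  compat_tau : ∀ (n : ℕ) (m : Fin (h ^ n)), ∀ p ∈ (η n m).tau,
    ∃ j : Fin h, β (n + 1) (treeChild m j) = p
  consistent : ∀ (n : ℕ) (m : Fin (h ^ n)) (p : Belief Ω),
    (∑ j : Fin h, if β (n + 1) (treeChild m j) = p then π (n + 1) (treeChild m j) else 0)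
      = π n m * (η n m).w p

/-- c' (at depth n + l) is a descendant of c (at depth n) in the h-ary tree. -/
def Descendant {h : ℕ} : {n : ℕ} → (l : ℕ) → Fin (h ^ n) → Fin (h ^ (n + l)) → Prop
  | _, 0, c, c' => c = c'
  | _, l + 1, c, c' => ∃ c'' j, Descendant l c c'' ∧ c' = treeChild c'' j

namespace HBranch

variable {h : ℕ}

/-- B terminates after vertex m at depth n. -/
def TermAfter (B : HBranch Ω F h μ) (n : ℕ) (m : Fin (h ^ n)) : Prop :=
  B.η n m ∈ Trivials Ω ∧
  ∀ (l : ℕ) (c' : Fin (h ^ (n + l))), Descendant l m c' → 0 < B.π (n + l) c' →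
    B.η (n + l) c' ∈ Trivials Ω

/-- Pr[B terminates after n steps]. -/
def termProb (B : HBranch Ω F h μ) (n : ℕ) : ℝ :=
  ∑ m : Fin (h ^ n), if B.TermAfter n m then B.π n m else 0

end HBranch

/-- B represents the infinite sequential persuasion S (via maps r_n : C_n → Ξ_n). -/
def Represents (S : SeqP F μ) {h : ℕ} (B : HBranch Ω F h μ) : Prop :=
  ∃ r : ∀ n : ℕ, Fin (h ^ n) → Hist Ω,
    ∀ n : ℕ,
      (∀ c, r n c ∈ Hists S n) ∧
      (∀ ξ ∈ Hists S n, histProb ξ = ∑ c, if r n c = ξ then B.π n c else 0) ∧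
      (∀ c, lastBelief μ (r n c) = B.β n c ∧ S.next (r n c) = B.η n c) ∧
      (∀ l : ℕ, ∀ ξ ∈ Hists S n, ∀ ξ' ∈ Hists S (n + l),
        (ξ <:+ ξ' ↔
          ∀ c' : Fin (h ^ (n + l)), r (n + l) c' = ξ' →
            ∃ c : Fin (h ^ n), r n c = ξ ∧ Descendant l c c'))

/-- The number of nontrivial experiments taken along a history. -/
def nontrivCount (ξ : Hist Ω) : ℕ :=
  ξ.countP fun s => decide (s.1 ∉ Trivials Ω)

end

noncomputable section Aux

open SPExp

variable {Ω : Type*} [Fintype Ω] {F : Set (SPExp Ω)} {μ q : Belief Ω}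

lemma expect_mono {e : SPExp Ω} {f f' : Belief Ω → ℝ}
    (h : ∀ p ∈ e.w.support, f p ≤ f' p) : e.expect f ≤ e.expect f' :=
  Finset.sum_le_sum fun p hp => mul_le_mul_of_nonneg_left (h p hp) (e.nonneg p)

lemma expect_const (e : SPExp Ω) (c : ℝ) : e.expect (fun _ => c) = c := by
  simp only [SPExp.expect, ← Finset.sum_mul]
  rw [e.sum_one, one_mul]

lemma expect_sub_const (e : SPExp Ω) (f : Belief Ω → ℝ) (c : ℝ) :
    e.expect (fun p => f p - c) = e.expect f - c := by
  simp only [SPExp.expect, mul_sub, Finset.sum_sub_distrib, ← Finset.sum_mul]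
  rw [e.sum_one, one_mul]

lemma triv_w (p : Belief Ω) : (SPExp.triv p).w = Finsupp.single p 1 := rfl

lemma expect_triv (p : Belief Ω) (f : Belief Ω → ℝ) : (SPExp.triv p).expect f = f p := by
  simp [SPExp.expect, triv_w, Finsupp.support_single_ne_zero _ one_ne_zero]

lemma sigma_triv (p : Belief Ω) : (SPExp.triv p).sigma = p := by
  apply Subtype.ext; funext ω
  show ∑ r ∈ (SPExp.triv p).w.support, (SPExp.triv p).w r * r.val ω = p.val ω
  simp [triv_w, Finsupp.support_single_ne_zero _ one_ne_zero]

lemma triv_mem_trivials (p : Belief Ω) : SPExp.triv p ∈ Trivials Ω := ⟨p, rfl⟩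

lemma lastBelief_cons (μ : Belief Ω) (s : SPExp Ω × Belief Ω) (ξ : Hist Ω) :
    lastBelief μ (s :: ξ) = s.2 := rfl

lemma lastBelief_pad (μ : Belief Ω) (ξ : Hist Ω) (l : ℕ) :
    lastBelief μ (padHist μ ξ l) = lastBelief μ ξ := by
  cases l with
  | zero => simp [padHist]
  | succ l => simp [padHist, List.replicate_succ, lastBelief]

lemma lastBelief_concat (μ : Belief Ω) (ζ : Hist Ω) (s : SPExp Ω × Belief Ω) :
    lastBelief μ (ζ ++ [s]) = lastBelief s.2 ζ := by
  cases ζ <;> simp [lastBelief]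

lemma padHist_concat (μ : Belief Ω) (ζ : Hist Ω) (s : SPExp Ω × Belief Ω) (l : ℕ) :
    padHist μ (ζ ++ [s]) l = padHist s.2 ζ l ++ [s] := by
  simp [padHist, lastBelief_concat]

lemma padHist_zero (μ : Belief Ω) (ξ : Hist Ω) : padHist μ ξ 0 = ξ := by simp [padHist]

lemma padHist_cons (μ : Belief Ω) (ξ : Hist Ω) (l : ℕ) :
    padHist μ ((SPExp.triv (lastBelief μ ξ), lastBelief μ ξ) :: ξ) l = padHist μ ξ (l + 1) := by
  simp only [padHist, lastBelief_cons]
  rw [List.replicate_succ']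
  simp

/-- The all-trivial strategy. -/
def trivStrat (hTF : Trivials Ω ⊆ F) (μ : Belief Ω) : SeqP F μ where
  next ξ := SPExp.triv (lastBelief μ ξ)
  feasible ξ := hTF (triv_mem_trivials _)
  bayes ξ := sigma_triv _

lemma trivStrat_term (hTF : Trivials Ω ⊆ F) (μ : Belief Ω) (ξ : Hist Ω) :
    TerminatesAfter (trivStrat hTF μ) ξ := fun l => by
  show SPExp.triv (lastBelief μ (padHist μ ξ l)) = _
  rw [lastBelief_pad]

theorem nonempty_seqP_of_triv (hTF : Trivials Ω ⊆ F) : Nonempty (SeqP F μ) := ⟨trivStrat hTF μ⟩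

lemma histExp_mono {S : SeqP F μ} {g g' : Hist Ω → ℝ} (h : ∀ ζ, g ζ ≤ g' ζ) :
    ∀ (n : ℕ) (ξ : Hist Ω), histExp S g n ξ ≤ histExp S g' n ξ
  | 0, ξ => h ξ
  | n + 1, ξ => expect_mono fun p _ => histExp_mono h n _

lemma histExp_const (S : SeqP F μ) (c : ℝ) :
    ∀ (n : ℕ) (ξ : Hist Ω), histExp S (fun _ => c) n ξ = c
  | 0, ξ => rfl
  | n + 1, ξ => by
      show (S.next ξ).expect (fun p => histExp S (fun _ => c) n _) = c
      calc (S.next ξ).expect (fun p => histExp S (fun _ => c) n ((S.next ξ, p) :: ξ))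
          = (S.next ξ).expect (fun _ => c) := by
            congr 1; funext p; exact histExp_const S c n _
        _ = c := expect_const _ c

lemma histExp_le {S : SeqP F μ} {g : Hist Ω → ℝ} {c : ℝ} (h : ∀ ζ, g ζ ≤ c)
    (n : ℕ) (ξ : Hist Ω) : histExp S g n ξ ≤ c :=
  (histExp_mono h n ξ).trans_eq (histExp_const S c n ξ)

lemma le_histExp {S : SeqP F μ} {g : Hist Ω → ℝ} {c : ℝ} (h : ∀ ζ, c ≤ g ζ)
    (n : ℕ) (ξ : Hist Ω) : c ≤ histExp S g n ξ :=
  (histExp_const S c n ξ).symm.trans_le (histExp_mono h n ξ)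

lemma histExp_congr_len {S : SeqP F μ} {g g' : Hist Ω → ℝ} :
    ∀ (n : ℕ) (ξ : Hist Ω), (∀ ζ : Hist Ω, ζ.length = n + ξ.length → g ζ = g' ζ) →
      histExp S g n ξ = histExp S g' n ξ
  | 0, ξ, h => h ξ (by simp)
  | n + 1, ξ, h => by
      show (S.next ξ).expect _ = (S.next ξ).expect _
      congr 1; funext p
      exact histExp_congr_len n _ (fun ζ hζ => h ζ (by simp at hζ ⊢; omega))

lemma histExp_congr_next {S S' : SeqP F μ} {g : Hist Ω → ℝ} :
    ∀ (n : ℕ) (ξ : Hist Ω),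
      (∀ ζ : Hist Ω, ξ.length ≤ ζ.length → ζ.length < ξ.length + n → S.next ζ = S'.next ζ) →
      histExp S g n ξ = histExp S' g n ξ
  | 0, ξ, _ => rfl
  | n + 1, ξ, h => by
      have he : S.next ξ = S'.next ξ := h ξ le_rfl (by omega)
      show (S.next ξ).expect (fun p => histExp S g n ((S.next ξ, p) :: ξ)) = _
      rw [he]
      congr 1; funext p
      exact histExp_congr_next n _ (fun ζ h1 h2 => h ζ (by simp at h1 ⊢; omega)
        (by simp at h2 ⊢; omega))

lemma histExp_succ_end (S : SeqP F μ) (g : Hist Ω → ℝ) :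
    ∀ (n : ℕ) (ξ : Hist Ω), histExp S g (n + 1) ξ =
      histExp S (fun ζ => (S.next ζ).expect fun p => g ((S.next ζ, p) :: ζ)) n ξ
  | 0, ξ => rfl
  | n + 1, ξ => by
      show (S.next ξ).expect _ = (S.next ξ).expect _
      congr 1; funext p
      exact histExp_succ_end S g n _

/-- The terminal-value integrand. -/
def termfun (v : Belief Ω → ℝ) (S : SeqP F μ) (ξ : Hist Ω) : ℝ :=
  if TerminatesAfter S ξ then v (lastBelief μ ξ) else 0

lemma infUtility_eq (v : Belief Ω → ℝ) (S : SeqP F μ) :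
    infUtility v S = ⨆ n : ℕ, histExp S (termfun v S) n [] := rfl

lemma term_cons {S : SeqP F μ} {ξ : Hist Ω} (h : TerminatesAfter S ξ) :
    TerminatesAfter S ((SPExp.triv (lastBelief μ ξ), lastBelief μ ξ) :: ξ) := fun l => by
  rw [padHist_cons, lastBelief_cons]
  exact h (l + 1)

lemma termfun_le_step (v : Belief Ω → ℝ) (hv : ∀ p, 0 ≤ v p) (S : SeqP F μ) (ξ : Hist Ω) :
    termfun v S ξ ≤ (S.next ξ).expect fun p => termfun v S ((S.next ξ, p) :: ξ) := by
  by_cases h : TerminatesAfter S ξ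
  · have h0 : S.next ξ = SPExp.triv (lastBelief μ ξ) := by
      have := h 0; rwa [padHist_zero] at this
    rw [termfun, if_pos h, h0, expect_triv]
    rw [termfun, if_pos (term_cons h), lastBelief_cons]
  · rw [termfun, if_neg h]
    refine (expect_const (S.next ξ) 0).symm.trans_le (expect_mono fun p _ => ?_)
    unfold termfun; split <;> [exact hv _; exact le_rfl]

lemma termval_mono (v : Belief Ω → ℝ) (hv : ∀ p, 0 ≤ v p) (S : SeqP F μ) :
    Monotone fun n => histExp S (termfun v S) n [] := by
  apply monotone_nat_of_le_succ
  intro n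
  rw [histExp_succ_end]
  exact histExp_mono (termfun_le_step v hv S) n []

lemma termfun_nonneg (v : Belief Ω → ℝ) (hv : ∀ p, 0 ≤ v p) (S : SeqP F μ) (ξ : Hist Ω) :
    0 ≤ termfun v S ξ := by unfold termfun; split <;> [exact hv _; exact le_rfl]

lemma termfun_le (v : Belief Ω → ℝ) {Vhi : ℝ} (hhi : 0 ≤ Vhi) (hv : ∀ p, v p ≤ Vhi)
    (S : SeqP F μ) (ξ : Hist Ω) : termfun v S ξ ≤ Vhi := by
  unfold termfun; split <;> [exact hv _; exact hhi]

lemma infUtility_le (v : Belief Ω → ℝ) {Vhi : ℝ} (hhi : 0 ≤ Vhi) (hv : ∀ p, v p ≤ Vhi)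
    (S : SeqP F μ) : infUtility v S ≤ Vhi :=
  ciSup_le fun n => histExp_le (termfun_le v hhi hv S) n []

lemma bddAbove_termval (v : Belief Ω → ℝ) {Vhi : ℝ} (hhi : 0 ≤ Vhi) (hv : ∀ p, v p ≤ Vhi)
    (S : SeqP F μ) : BddAbove (Set.range fun n => histExp S (termfun v S) n []) :=
  ⟨Vhi, by rintro _ ⟨n, rfl⟩; exact histExp_le (termfun_le v hhi hv S) n []⟩

lemma vInf_le (v : Belief Ω → ℝ) {Vhi : ℝ} (hhi : 0 ≤ Vhi) (hv : ∀ p, v p ≤ Vhi)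
    (hTF : Trivials Ω ⊆ F) (p : Belief Ω) : vInf F v p ≤ Vhi := by
  haveI : Nonempty (SeqP F p) := ⟨trivStrat hTF p⟩
  exact ciSup_le fun S => infUtility_le v hhi hv S

lemma bddAbove_infUtility (v : Belief Ω → ℝ) {Vhi : ℝ} (hhi : 0 ≤ Vhi) (hv : ∀ p, v p ≤ Vhi) :
    BddAbove (Set.range fun S : SeqP F μ => infUtility v S) :=
  ⟨Vhi, by rintro _ ⟨S, rfl⟩; exact infUtility_le v hhi hv S⟩

lemma termval_le_vInf (v : Belief Ω → ℝ) {Vhi : ℝ} (hhi : 0 ≤ Vhi) (hv : ∀ p, v p ≤ Vhi)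
    (S : SeqP F μ) (n : ℕ) : histExp S (termfun v S) n [] ≤ vInf F v μ :=
  (le_ciSup (bddAbove_termval v hhi hv S) n).trans
    (le_ciSup (bddAbove_infUtility v hhi hv) S)

lemma v_le_vInf (v : Belief Ω → ℝ) {Vhi : ℝ} (hhi : 0 ≤ Vhi) (hv : ∀ p, v p ≤ Vhi)
    (hTF : Trivials Ω ⊆ F) (p : Belief Ω) : v p ≤ vInf F v p := by
  have h0 : v p = histExp (trivStrat hTF p) (termfun v (trivStrat hTF p)) 0 [] := by
    rw [show histExp (trivStrat hTF p) (termfun v (trivStrat hTF p)) 0 [] =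
        termfun v (trivStrat hTF p) [] from rfl, termfun, if_pos (trivStrat_term hTF p [])]
    rfl
  rw [h0]
  exact termval_le_vInf v hhi hv _ 0

end Aux
noncomputable section Aux2

open SPExp

variable {Ω : Type*} [Fintype Ω] {F : Set (SPExp Ω)} {μ q : Belief Ω}

/-- Composite strategy: first run e, then follow T p from the realized posterior p. -/
def compStrat (e : SPExp Ω) (he : e ∈ F) (hq : e.sigma = q) (T : ∀ p : Belief Ω, SeqP F p) :
    SeqP F q where
  next ξ := ξ.getLast?.elim e fun s => (T s.2).next ξ.dropLast
  feasible ξ := by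
    rcases ξ.eq_nil_or_concat with rfl | ⟨ζ, s, rfl⟩
    · exact he
    · simpa using (T s.2).feasible ζ
  bayes ξ := by
    rcases ξ.eq_nil_or_concat with rfl | ⟨ζ, s, rfl⟩
    · exact hq
    · simp only [List.concat_eq_append]
      show ((ζ ++ [s]).getLast?.elim e fun s' => (T s'.2).next (ζ ++ [s]).dropLast).sigma = _
      rw [List.getLast?_concat, List.dropLast_concat, lastBelief_concat]
      exact (T s.2).bayes ζ

lemma compStrat_nil (e : SPExp Ω) (he : e ∈ F) (hq : e.sigma = q) (T : ∀ p, SeqP F p) :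
    (compStrat e he hq T).next [] = e := rfl

lemma compStrat_concat (e : SPExp Ω) (he : e ∈ F) (hq : e.sigma = q) (T : ∀ p, SeqP F p)
    (ζ : Hist Ω) (s : SPExp Ω × Belief Ω) :
    (compStrat e he hq T).next (ζ ++ [s]) = (T s.2).next ζ := by
  simp only [compStrat]
  rw [List.getLast?_concat, List.dropLast_concat]
  rfl

lemma compStrat_term (e : SPExp Ω) (he : e ∈ F) (hq : e.sigma = q) (T : ∀ p, SeqP F p)
    (ζ : Hist Ω) (s : SPExp Ω × Belief Ω) :
    TerminatesAfter (compStrat e he hq T) (ζ ++ [s]) ↔ TerminatesAfter (T s.2) ζ := by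
  unfold TerminatesAfter
  apply forall_congr'
  intro l
  rw [padHist_concat, compStrat_concat, lastBelief_concat]

lemma histExp_comp (e : SPExp Ω) (he : e ∈ F) (hq : e.sigma = q) (T : ∀ p, SeqP F p)
    (g : Hist Ω → ℝ) :
    ∀ (n : ℕ) (ζ : Hist Ω) (s : SPExp Ω × Belief Ω),
      histExp (compStrat e he hq T) g n (ζ ++ [s]) =
        histExp (T s.2) (fun ζ' => g (ζ' ++ [s])) n ζ
  | 0, ζ, s => rfl
  | n + 1, ζ, s => by
      show ((compStrat e he hq T).next (ζ ++ [s])).expect _ = ((T s.2).next ζ).expect _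
      rw [compStrat_concat]
      congr 1; funext p
      show histExp (compStrat e he hq T) g n ((((T s.2).next ζ, p) :: ζ) ++ [s]) = _
      exact histExp_comp e he hq T g n (((T s.2).next ζ, p) :: ζ) s

lemma termfun_comp (v : Belief Ω → ℝ) (e : SPExp Ω) (he : e ∈ F) (hq : e.sigma = q)
    (T : ∀ p, SeqP F p) (s : SPExp Ω × Belief Ω) (ζ : Hist Ω) :
    termfun v (compStrat e he hq T) (ζ ++ [s]) = termfun v (T s.2) ζ := by
  unfold termfun
  rw [lastBelief_concat]
  by_cases h : TerminatesAfter (T s.2) ζ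
  · rw [if_pos h, if_pos ((compStrat_term e he hq T ζ s).mpr h)]
  · rw [if_neg h, if_neg (fun h' => h ((compStrat_term e he hq T ζ s).mp h'))]

/-- the key supermartingale property of vInf. -/
lemma vInf_superm (v : Belief Ω → ℝ) {Vlo Vhi : ℝ} (hVlo : 0 < Vlo) (hVV : Vlo ≤ Vhi)
    (hvlo : ∀ p, Vlo ≤ v p) (hvhi : ∀ p, v p ≤ Vhi) (hTF : Trivials Ω ⊆ F)
    (e : SPExp Ω) (he : e ∈ F) : e.expect (vInf F v) ≤ vInf F v e.sigma := by
  have hhi : (0:ℝ) ≤ Vhi := le_trans hVlo.le hVV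
  have hv0 : ∀ p, 0 ≤ v p := fun p => le_trans hVlo.le (hvlo p)
  refine le_of_forall_pos_le_add fun ε hε => ?_
  -- choose ε-optimal strategies
  have hch : ∀ p : Belief Ω, ∃ S : SeqP F p, vInf F v p - ε / 2 < infUtility v S := by
    intro p
    haveI : Nonempty (SeqP F p) := ⟨trivStrat hTF p⟩
    exact exists_lt_of_lt_ciSup (show vInf F v p - ε / 2 < vInf F v p by linarith)
  choose T hT using hch
  -- choose a uniform horizon on the (finite) support
  have hN : ∀ p : Belief Ω, ∃ N : ℕ,
      infUtility v (T p) - ε / 2 ≤ histExp (T p) (termfun v (T p)) N [] := by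
    intro p
    rcases exists_lt_of_lt_ciSup
        (show infUtility v (T p) - ε / 2 < ⨆ n : ℕ, histExp (T p) (termfun v (T p)) n []
          from by rw [← infUtility_eq]; linarith [hε]) with ⟨N, hN⟩
    exact ⟨N, hN.le⟩
  choose Nf hNf using hN
  obtain ⟨N, hNbig⟩ : ∃ N : ℕ, ∀ p ∈ e.w.support, Nf p ≤ N :=
    ⟨e.w.support.sup Nf, fun p hp => Finset.le_sup hp⟩
  set S := compStrat e he rfl T with hS
  have key : histExp S (termfun v S) (N + 1) [] = e.expect fun p => histExp (T p) (termfun v (T p)) N [] := by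
    show (S.next []).expect (fun p => histExp S (termfun v S) N ((S.next [], p) :: [])) = _
    rw [show S.next [] = e from rfl]
    congr 1; funext p
    have : ((e, p) : SPExp Ω × Belief Ω) :: [] = [] ++ [(e, p)] := rfl
    rw [this, histExp_comp]
    congr 1; funext ζ
    exact termfun_comp v e he rfl T (e, p) ζ
  have h1 : e.expect (fun p => histExp (T p) (termfun v (T p)) N []) ≤ vInf F v e.sigma := by
    rw [← key]
    exact termval_le_vInf v hhi hvhi S (N + 1)
  have h2 : e.expect (fun p => vInf F v p - ε) ≤
      e.expect fun p => histExp (T p) (termfun v (T p)) N [] := by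
    refine expect_mono fun p hp => ?_
    have m1 : vInf F v p - ε / 2 ≤ infUtility v (T p) := (hT p).le
    have m2 := hNf p
    have m3 : histExp (T p) (termfun v (T p)) (Nf p) [] ≤ histExp (T p) (termfun v (T p)) N [] :=
      termval_mono v hv0 (T p) (hNbig p hp)
    linarith
  rw [expect_sub_const] at h2
  linarith

end Aux2
noncomputable section Aux3

open SPExp

variable {Ω : Type*} [Fintype Ω] {F : Set (SPExp Ω)} {μ : Belief Ω}

lemma histExp_superm {g : Belief Ω → ℝ} (hsm : ∀ e ∈ F, e.expect g ≤ g e.sigma)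
    (S : SeqP F μ) : ∀ (n : ℕ) (ξ : Hist Ω),
      histExp S (fun ζ => g (lastBelief μ ζ)) n ξ ≤ g (lastBelief μ ξ)
  | 0, ξ => le_rfl
  | n + 1, ξ => by
      show (S.next ξ).expect _ ≤ _
      calc (S.next ξ).expect
            (fun p => histExp S (fun ζ => g (lastBelief μ ζ)) n ((S.next ξ, p) :: ξ))
          ≤ (S.next ξ).expect g :=
            expect_mono fun p _ => histExp_superm hsm S n ((S.next ξ, p) :: ξ)
        _ ≤ g (S.next ξ).sigma := hsm _ (S.feasible ξ)
        _ = g (lastBelief μ ξ) := by rw [S.bayes ξ]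

lemma vInf_le_superm (v : Belief Ω → ℝ) (hv0 : ∀ p, 0 ≤ v p)
    {g : Belief Ω → ℝ} (hgv : ∀ p, v p ≤ g p) (hsm : ∀ e ∈ F, e.expect g ≤ g e.sigma)
    (hTF : Trivials Ω ⊆ F) (p : Belief Ω) : vInf F v p ≤ g p := by
  haveI : Nonempty (SeqP F p) := ⟨trivStrat hTF p⟩
  refine ciSup_le fun S => ciSup_le fun n => ?_
  calc histExp S (termfun v S) n []
      ≤ histExp S (fun ζ => g (lastBelief p ζ)) n [] := by
        refine histExp_mono (fun ζ => ?_) n []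
        unfold termfun; split
        · exact hgv _
        · exact le_trans (hv0 _) (hgv _)
    _ ≤ g (lastBelief p []) := histExp_superm hsm S n []
    _ = g p := rfl

/-- Cutoff of S after n steps. -/
def cutoff (hTF : Trivials Ω ⊆ F) (S : SeqP F μ) (n : ℕ) : SeqP F μ where
  next ξ := if ξ.length < n then S.next ξ else SPExp.triv (lastBelief μ ξ)
  feasible ξ := by
    split
    · exact S.feasible ξ
    · exact hTF (triv_mem_trivials _)
  bayes ξ := by
    split
    · exact S.bayes ξ
    · exact sigma_triv _

lemma cutoff_term (hTF : Trivials Ω ⊆ F) (S : SeqP F μ) (n : ℕ) (ξ : Hist Ω)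
    (h : n ≤ ξ.length) : TerminatesAfter (cutoff hTF S n) ξ := by
  intro l
  simp only [cutoff]
  rw [if_neg (by simp [padHist]; omega), lastBelief_pad]

lemma vN_le_vInf (v : Belief Ω → ℝ) {Vlo Vhi : ℝ} (hVlo : 0 < Vlo) (hVV : Vlo ≤ Vhi)
    (hvlo : ∀ p, Vlo ≤ v p) (hvhi : ∀ p, v p ≤ Vhi) (hTF : Trivials Ω ⊆ F)
    (n : ℕ) (p : Belief Ω) : vN F v n p ≤ vInf F v p := by
  have hhi : (0:ℝ) ≤ Vhi := le_trans hVlo.le hVV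
  haveI : Nonempty (SeqP F p) := ⟨trivStrat hTF p⟩
  refine ciSup_le fun S => ?_
  set S' := cutoff hTF S n with hS'
  have e1 : stepUtility v S n = histExp S' (fun ξ => v (lastBelief p ξ)) n [] := by
    refine histExp_congr_next n [] fun ζ _ h2 => ?_
    simp only [S', cutoff]
    rw [if_pos (by simpa using h2)]
  have e2 : histExp S' (fun ξ => v (lastBelief p ξ)) n [] = histExp S' (termfun v S') n [] := by
    refine histExp_congr_len n [] fun ζ hζ => ?_
    rw [termfun, if_pos (cutoff_term hTF S n ζ (by omega))]
  rw [e1, e2]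
  exact termval_le_vInf v hhi hvhi S' n

end Aux3
/-- Corollary: finitely many steps suffice at p iff some g ∈ G certifies it. -/
theorem coro_finite_steps {Ω : Type*} [Fintype Ω] [Nonempty Ω]
    (F : Set (SPExp Ω)) (hTF : Trivials Ω ⊆ F)
    (v : Belief Ω → ℝ) (Vlo Vhi : ℝ) (hVlo : 0 < Vlo) (hVV : Vlo ≤ Vhi)
    (hvlo : ∀ p, Vlo ≤ v p) (hvhi : ∀ p, v p ≤ Vhi)
    (husc : UpperSemicontinuous v) :
    ∀ (n : ℕ) (p : Belief Ω),
      vN F v n p = vInf F v p ↔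
        ∃ g : Belief Ω → ℝ,
          (∀ q, v q ≤ g q) ∧
          (∀ e ∈ F, SPExp.expect e g ≤ g (SPExp.sigma e)) ∧
          g p = vN F v n p := by
  intro n p
  have hhi : (0:ℝ) ≤ Vhi := hVlo.le.trans hVV
  have hv0 : ∀ q, (0:ℝ) ≤ v q := fun q => hVlo.le.trans (hvlo q)
  constructor
  · intro heq
    exact ⟨vInf F v, fun q => v_le_vInf v hhi hvhi hTF q,
      fun e he => vInf_superm v hVlo hVV hvlo hvhi hTF e he, heq.symm⟩
  · rintro ⟨g, hgv, hgsm, hgp⟩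
    refine le_antisymm (vN_le_vInf v hVlo hVV hvlo hvhi hTF n p) ?_
    calc vInf F v p ≤ g p := vInf_le_superm v hv0 hgv hgsm hTF p
      _ = vN F v n p := hgp
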